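/- (Lemma 3, part (a)) Let $\mathcal{P}_{G_X}$ be any decomposition of the confusability graph $G_X$, i.e., a partition of $\llbracket X\rrbracket$ such that there is no edge of $G_X$ between distinct blocks. For a block $\mathcal{X} \subseteq \llbracket X\rrbracket$ write $\llbracket S\mid\mathcal{X}\rrbracket = \bigcup_{x \in \mathcal{X}} \llbracket S\mid x\rrbracket$. Then $\{\llbracket S\mid\mathcal{X}\rrbracket : \mathcal{X} \in \mathcal{P}_{G_X}\}$ is a partition of $\llbracket S\rrbracket$ and it is overlap isolated: no point of one block is overlap connected to a point of a different block. -/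
import Mathlib


/-- The conditional range `⟦S∣x⟧ = {S(ω) : ω ∈ Ω, X(ω) = x}`. -/
def condRange {Ω 𝕊 𝕏 : Type*} (S : Ω → 𝕊) (X : Ω → 𝕏) (x : 𝕏) : Set 𝕊 :=
  {s | ∃ ω, X ω = x ∧ S ω = s}

/-- Overlap connectedness. -/
def OverlapConn {Ω 𝕊 𝕏 : Type*} (S : Ω → 𝕊) (X : Ω → 𝕏) (s s' : 𝕊) : Prop :=
  ∃ n : ℕ, ∃ xs : Fin (n + 1) → 𝕏,
    (∀ i, xs i ∈ Set.range X) ∧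
    s ∈ condRange S X (xs 0) ∧ s' ∈ condRange S X (xs (Fin.last n)) ∧
    ∀ i : Fin n, (condRange S X (xs i.castSucc) ∩ condRange S X (xs i.succ)).Nonempty

/-- `P` is a partition of `U` (nonempty, pairwise disjoint blocks covering `U`). -/
def IsPartitionOf {α : Type*} (P : Set (Set α)) (U : Set α) : Prop :=
  (∀ A ∈ P, A.Nonempty) ∧ (∀ A ∈ P, ∀ B ∈ P, A ≠ B → Disjoint A B) ∧ ⋃₀ P = U

/-- `P` is overlap isolated. -/
def OverlapIsolated {Ω 𝕊 𝕏 : Type*} (S : Ω → 𝕊) (X : Ω → 𝕏) (P : Set (Set 𝕊)) : Prop :=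
  ∀ A ∈ P, ∀ B ∈ P, A ≠ B → ∀ s ∈ A, ∀ s' ∈ B, ¬ OverlapConn S X s s'

/-- Lemma 3(a): if `𝒫` is a decomposition of the confusability graph `G_X` (a partition of `⟦X⟧`
with no edge between distinct blocks, i.e. conditional ranges of points of distinct blocks are
disjoint), then `{ ⟦S∣𝒳⟧ : 𝒳 ∈ 𝒫 }` with `⟦S∣𝒳⟧ = ⋃_{x ∈ 𝒳} ⟦S∣x⟧` is an overlap isolated
partition of `⟦S⟧`. -/
theorem graph_decomposition_isolated {Ω 𝕊 𝕏 : Type*} [Nonempty Ω] [Fintype 𝕊] [Fintype 𝕏]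
    (S : Ω → 𝕊) (X : Ω → 𝕏) (P : Set (Set 𝕏))
    (hP : IsPartitionOf P (Set.range X))
    (hNoEdge : ∀ A ∈ P, ∀ B ∈ P, A ≠ B → ∀ x ∈ A, ∀ x' ∈ B,
      condRange S X x ∩ condRange S X x' = ∅) :
    IsPartitionOf {C : Set 𝕊 | ∃ A ∈ P, C = ⋃ x ∈ A, condRange S X x} (Set.range S)
    ∧ OverlapIsolated S X {C : Set 𝕊 | ∃ A ∈ P, C = ⋃ x ∈ A, condRange S X x} := by
  obtain ⟨hne, hdisj, hcover⟩ := hP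
  have hmem : ∀ x ∈ Set.range X, ∃ A ∈ P, x ∈ A := by
    intro x hx
    rw [← hcover] at hx
    simpa [Set.mem_sUnion] using hx
  have key : ∀ {A B : Set 𝕏} {x x' : 𝕏}, A ∈ P → B ∈ P → x ∈ A → x' ∈ B →
      (condRange S X x ∩ condRange S X x').Nonempty → A = B := by
    rintro A B x x' hA hB hx hx' ⟨s, hs⟩
    by_contra h
    rw [hNoEdge A hA B hB h x hx x' hx'] at hs
    exact hs
  constructor
  · refine ⟨?_, ?_, ?_⟩
    · rintro C ⟨A, hA, rfl⟩
      obtain ⟨x, hx⟩ := hne A hA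
      have hxr : x ∈ Set.range X := by
        rw [← hcover]; exact ⟨A, hA, hx⟩
      obtain ⟨ω, hω⟩ := hxr
      exact ⟨S ω, Set.mem_biUnion hx ⟨ω, hω, rfl⟩⟩
    · rintro C ⟨A, hA, rfl⟩ D ⟨B, hB, rfl⟩ hCD
      have hAB : A ≠ B := by rintro rfl; exact hCD rfl
      rw [Set.disjoint_left]
      rintro s hs hs'
      obtain ⟨x, hx, hsx⟩ := Set.mem_iUnion₂.mp hs
      obtain ⟨x', hx', hsx'⟩ := Set.mem_iUnion₂.mp hs'
      have := hNoEdge A hA B hB hAB x hx x' hx'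
      exact absurd (Set.mem_inter hsx hsx') (by rw [this]; exact Set.notMem_empty s)
    · ext s
      constructor
      · rintro ⟨C, ⟨A, hA, rfl⟩, hs⟩
        obtain ⟨x, _, ⟨ω, _, rfl⟩⟩ := Set.mem_iUnion₂.mp hs
        exact ⟨ω, rfl⟩
      · rintro ⟨ω, rfl⟩
        obtain ⟨A, hA, hxA⟩ := hmem (X ω) ⟨ω, rfl⟩
        exact ⟨_, ⟨A, hA, rfl⟩, Set.mem_biUnion hxA ⟨ω, rfl, rfl⟩⟩
  · rintro C ⟨A, hA, rfl⟩ D ⟨B, hB, rfl⟩ hCD s hs s' hs' ⟨n, xs, hxr, hs0, hsl, hadj⟩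
    have hAB : A ≠ B := by rintro rfl; exact hCD rfl
    obtain ⟨x₀, hx₀A, hsx₀⟩ := Set.mem_iUnion₂.mp hs
    obtain ⟨x₁, hx₁B, hsx₁⟩ := Set.mem_iUnion₂.mp hs'
    have hchain : ∀ i : Fin (n + 1), xs i ∈ A := by
      intro i
      induction i using Fin.induction with
      | zero =>
        obtain ⟨A₀, hA₀, hx⟩ := hmem (xs 0) (hxr 0)
        have : A₀ = A := key hA₀ hA hx hx₀A ⟨s, hs0, hsx₀⟩
        exact this ▸ hx
      | succ i ih =>
        obtain ⟨Ai, hAi, hx⟩ := hmem (xs i.succ) (hxr i.succ)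
        have : A = Ai := key hA hAi (ih) hx (hadj i)
        exact this ▸ hx
    have hlast := hchain (Fin.last n)
    obtain ⟨B₀, hB₀, hx⟩ := hmem (xs (Fin.last n)) (hxr (Fin.last n))
    have h1 : A = B₀ := key hA hB₀ hlast hx ⟨s', hsl, hsl⟩
    have h2 : B₀ = B := key hB₀ hB hx hx₁B ⟨s', hsl, hsx₁⟩
    exact hAB (h1.trans h2)
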